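/- (Crystallization out of the ocean.) Let 0 < r < 1/2 and consider the blockchain oceanic game Γ⁺ = [1/2; r; 1 − r] in which a single entity crystallizes a fraction r of the total (normalized) resources out of the ocean. Then the crystallized entity's value per unit of resource is v_1 = φ_1/r = 1/(1 − r), the oceanic value per unit of resource is v_oc = Φ/(1 − r) = (1 − 2r)/(1 − r)², and v_1 > v_oc. In particular, the coalition's per-unit value strictly exceeds the oceanic per-unit value for every positive fraction r of crystallized resources. -/

import Mathlib

open MeasureTheory Finset

/-- The uniform probability measure on the unit cube `[0,1]^m`. -/
noncomputable def cubeMeasure (m : ℕ) : Measure (Fin m → ℝ) :=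
  Measure.pi fun _ => volume.restrict (Set.Icc (0:ℝ) 1)

/-- The event that miner `i` is pivotal: with `r(x) = ∑_j r_j · 1{X_j < X_i}`,
`r(X_i) + α·X_i < q ≤ r(X_i) + α·X_i + r_i`. -/
def pivotEvent (m : ℕ) (q α : ℝ) (r : Fin m → ℝ) (i : Fin m) : Set (Fin m → ℝ) :=
  {x | (∑ j, if x j < x i then r j else 0) + α * x i < q ∧
       q ≤ (∑ j, if x j < x i then r j else 0) + α * x i + r i}

/-- The value `φ_i` of major miner `i` in the blockchain oceanic game
`Γ = [q; r_1,…,r_m; α]`. -/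
noncomputable def minerValue (m : ℕ) (q α : ℝ) (r : Fin m → ℝ) (i : Fin m) : ℝ :=
  (cubeMeasure m (pivotEvent m q α r i)).toReal

/-- The oceanic value `Φ = 1 - ∑_i φ_i`. -/
noncomputable def oceanicValue (m : ℕ) (q α : ℝ) (r : Fin m → ℝ) : ℝ :=
  1 - ∑ i, minerValue m q α r i

/-- Crystallization out of the ocean: in `Γ⁺ = [1/2; r; 1-r]` with `0 < r < 1/2`,
the crystallized entity's per-unit value is `1/(1-r)`, the oceanic per-unit value is
`(1-2r)/(1-r)²`, and the former strictly exceeds the latter. -/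
theorem stmt_9 (r : ℝ) (hr : 0 < r) (hr' : r < 1 / 2) :
    minerValue 1 (1 / 2) (1 - r) (fun _ => r) 0 / r = 1 / (1 - r) ∧
    oceanicValue 1 (1 / 2) (1 - r) (fun _ => r) / (1 - r) = (1 - 2 * r) / (1 - r) ^ 2 ∧
    oceanicValue 1 (1 / 2) (1 - r) (fun _ => r) / (1 - r) <
      minerValue 1 (1 / 2) (1 - r) (fun _ => r) 0 / r := by
  have h1 : (0:ℝ) < 1 - r := by linarith
  set a : ℝ := (1/2 - r) / (1 - r) with ha
  set b : ℝ := (1/2) / (1 - r) with hb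
  have ha0 : 0 ≤ a := div_nonneg (by linarith) h1.le
  have hb1 : b ≤ 1 := by rw [hb, div_le_one h1]; linarith
  have hset : pivotEvent 1 (1/2) (1-r) (fun _ => r) 0
      = Set.pi Set.univ (fun _ : Fin 1 => Set.Ico a b) := by
    ext x
    simp only [pivotEvent, Set.mem_setOf_eq, Set.mem_pi, Set.mem_univ, Set.mem_Ico,
      forall_true_left, Fin.sum_univ_one, lt_irrefl, if_false, zero_add]
    constructor
    · rintro ⟨h2, h3⟩ j
      have hj : j = 0 := Subsingleton.elim _ _
      subst hj
      constructor
      · rw [ha, div_le_iff₀ h1]; linarith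
      · rw [hb, lt_div_iff₀ h1]; linarith
    · intro h
      obtain ⟨h2, h3⟩ := h 0
      rw [ha, div_le_iff₀ h1] at h2
      rw [hb, lt_div_iff₀ h1] at h3
      constructor <;> linarith
  have hmeas : cubeMeasure 1 (pivotEvent 1 (1/2) (1-r) (fun _ => r) 0)
      = ENNReal.ofReal (r / (1 - r)) := by
    rw [hset, cubeMeasure, Measure.pi_pi]
    rw [Fin.prod_univ_one,
      Measure.restrict_apply measurableSet_Ico]
    have : Set.Ico a b ∩ Set.Icc (0:ℝ) 1 = Set.Ico a b := by
      apply Set.inter_eq_self_of_subset_left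
      intro x hx
      exact ⟨le_trans ha0 hx.1, le_trans hx.2.le hb1⟩
    rw [this, Real.volume_Ico]
    congr 1
    rw [ha, hb]
    field_simp
    ring
  have hmv : minerValue 1 (1/2) (1-r) (fun _ => r) 0 = r / (1 - r) := by
    rw [minerValue, hmeas, ENNReal.toReal_ofReal (div_nonneg hr.le h1.le)]
  have hoc : oceanicValue 1 (1/2) (1-r) (fun _ => r) = (1 - 2*r) / (1 - r) := by
    rw [oceanicValue, Fin.sum_univ_one, hmv]
    field_simp
    ring
  refine ⟨?_, ?_, ?_⟩
  · rw [hmv]; field_simp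
  · rw [hoc, div_div, sq]
  · have hA : (r/(1-r))/r = 1/(1-r) := by field_simp
    rw [hmv, hoc, hA, div_div, div_lt_div_iff₀ (by positivity) h1]
    nlinarith
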